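/- Every invertible k-nonnegative n×n real matrix X (1 ≤ k ≤ n) can be factored as X = P·M·Q, where P and Q are finite (possibly empty) products of Chevalley generators e_i(c) and f_i(c) with positive parameters c > 0, and M is an invertible k-nonnegative k-irreducible matrix. -/

import Mathlib

open Matrix

/-- A square real matrix is `k`-nonnegative if every minor of order at most `k`
(indexed by strictly increasing row and column selections) is nonnegative. -/
def IsKNonneg {n : ℕ} (k : ℕ) (X : Matrix (Fin n) (Fin n) ℝ) : Prop :=
  ∀ m : ℕ, m ≤ k → ∀ I J : Fin m → Fin n, StrictMono I → StrictMono J →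
    0 ≤ (X.submatrix I J).det

/-- The Chevalley generator `e_i(a)` (0-based index `i`): the identity matrix with
entry `a` in position `(i, i+1)`.  `f_i(a)` is its transpose. -/
def chevE (n : ℕ) (i : ℕ) (a : ℝ) : Matrix (Fin n) (Fin n) ℝ :=
  fun p q => if (p : ℕ) = (q : ℕ) then 1
    else if (p : ℕ) = i ∧ (q : ℕ) = i + 1 then a
    else 0

/-- A matrix is a Chevalley generator with positive parameter: some `e_i(a)` or
`f_i(a) = e_i(a)ᵀ` with `a > 0`. -/
def IsChevalley {n : ℕ} (M : Matrix (Fin n) (Fin n) ℝ) : Prop :=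
  ∃ i a, i + 1 < n ∧ 0 < a ∧ (M = chevE n i a ∨ M = (chevE n i a)ᵀ)

/-- A matrix is a finite (possibly empty) product of Chevalley generators with
positive parameters. -/
def IsChevProd {n : ℕ} (P : Matrix (Fin n) (Fin n) ℝ) : Prop :=
  ∃ L : List (Matrix (Fin n) (Fin n) ℝ), (∀ M ∈ L, IsChevalley M) ∧ P = L.prod

/-- A `k`-nonnegative invertible matrix `M` is `k`-irreducible if in any factorization
`M = R * S` with `R`, `S` invertible and `k`-nonnegative, neither factor is a Chevalley
generator with positive parameter. -/
def KIrreducible {n : ℕ} (k : ℕ) (M : Matrix (Fin n) (Fin n) ℝ) : Prop :=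
  ∀ R S : Matrix (Fin n) (Fin n) ℝ, IsUnit R → IsUnit S →
    IsKNonneg k R → IsKNonneg k S → M = R * S →
    ¬ IsChevalley R ∧ ¬ IsChevalley S

namespace ChevAux

variable {n k : ℕ}

abbrev Mat (n : ℕ) := Matrix (Fin n) (Fin n) ℝ

instance {m n : ℕ} : DecidablePred (fun f : Fin m → Fin n => StrictMono f) :=
  fun f => decidable_of_iff (∀ a b : Fin m, a < b → f a < f b) Iff.rfl

def MinorIdx (n k : ℕ) :=
  Σ m : Fin (k+1), {p : (Fin (m : ℕ) → Fin n) × (Fin (m : ℕ) → Fin n) //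
    StrictMono p.1 ∧ StrictMono p.2}

instance : Fintype (MinorIdx n k) := by unfold MinorIdx; infer_instance

def minorOf (k : ℕ) (X : Mat n) (t : MinorIdx n k) : ℝ :=
  ((X.submatrix t.2.1.1 t.2.1.2).det)

noncomputable def Nnz (k : ℕ) (X : Mat n) : ℕ :=
  (Finset.univ.filter fun t : MinorIdx n k => minorOf k X t ≠ 0).card

/-- Row operation: add `u` times row `s` to row `r`. -/
def Yrow (X : Mat n) (r s : Fin n) (u : ℝ) : Mat n :=
  updateRow X r (fun q => X r q + u * X s q)

noncomputable def Dm (X : Mat n) (r s : Fin n) {m : ℕ} (I J : Fin m → Fin n) : ℝ :=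
  ((Yrow X r s 1).submatrix I J).det - ((X.submatrix I J).det)

lemma Yrow_submatrix_of_notMem (X : Mat n) (r s : Fin n) (u : ℝ) {m : ℕ}
    {I J : Fin m → Fin n} (hr : ∀ p, I p ≠ r) :
    (Yrow X r s u).submatrix I J = X.submatrix I J := by
  ext q j
  simp [Yrow, Matrix.submatrix_apply, Matrix.updateRow_ne (hr q)]

lemma Yrow_submatrix_of_mem (X : Mat n) (r s : Fin n) (u : ℝ) {m : ℕ}
    {I J : Fin m → Fin n} (hI : Function.Injective I) {p : Fin m} (hp : I p = r) :
    (Yrow X r s u).submatrix I J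
      = updateRow (X.submatrix I J) p (fun j => X r (J j) + u * X s (J j)) := by
  ext q j
  by_cases hq : q = p
  · subst hq
    simp [Yrow, Matrix.submatrix_apply, hp, Matrix.updateRow_self]
  · have hne : I q ≠ r := fun h => hq (hI (h.trans hp.symm))
    simp [Yrow, Matrix.submatrix_apply, Matrix.updateRow_ne hne, Matrix.updateRow_ne hq]

lemma det_updateRow_combo {m : ℕ} (A : Matrix (Fin m) (Fin m) ℝ) (p : Fin m)
    (u : ℝ) (w : Fin m → ℝ) :
    (updateRow A p (fun j => A p j + u * w j)).det = A.det + u * (updateRow A p w).det := by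
  have h : (fun j => A p j + u * w j) = A p + u • w := by
    funext j; simp [Pi.add_apply, Pi.smul_apply, smul_eq_mul]
  rw [h, Matrix.det_updateRow_add, Matrix.det_updateRow_smul, Matrix.updateRow_eq_self]

lemma minor_Yrow (X : Mat n) (r s : Fin n) {m : ℕ}
    {I J : Fin m → Fin n} (hI : Function.Injective I) (u : ℝ) :
    ((Yrow X r s u).submatrix I J).det = (X.submatrix I J).det + u * Dm X r s I J := by
  by_cases hr : ∃ p, I p = r
  · obtain ⟨p, hp⟩ := hr
    have hfun : ∀ u : ℝ, (fun j => X r (J j) + u * X s (J j))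
        = (fun j => (X.submatrix I J) p j + u * X s (J j)) := by
      intro u; funext j; simp [Matrix.submatrix_apply, hp]
    have key : ∀ u : ℝ, ((Yrow X r s u).submatrix I J).det
        = (X.submatrix I J).det + u * (updateRow (X.submatrix I J) p (fun j => X s (J j))).det := by
      intro u
      rw [Yrow_submatrix_of_mem X r s u hI hp, hfun u,
        det_updateRow_combo (X.submatrix I J) p u (fun j => X s (J j))]
    have hDm : Dm X r s I J = (updateRow (X.submatrix I J) p (fun j => X s (J j))).det := by
      unfold Dm; rw [key 1]; ring
    rw [key u, hDm]
  · push_neg at hr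
    have hDm : Dm X r s I J = 0 := by
      unfold Dm; rw [Yrow_submatrix_of_notMem X r s 1 hr]; ring
    rw [Yrow_submatrix_of_notMem X r s u hr, hDm]; ring

lemma strictMono_update {m : ℕ} {I : Fin m → Fin n} (hI : StrictMono I)
    {r s : Fin n} (Hadj : ∀ x : Fin n, x ≠ r → x ≠ s → (x < r ↔ x < s))
    {p : Fin m} (hp : I p = r) (hs : ∀ q, I q ≠ s) :
    StrictMono (Function.update I p s) := by
  intro a b hab
  by_cases hap : a = p
  · subst hap
    by_cases hbp : b = a
    · exact absurd (hbp ▸ hab) (lt_irrefl _)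
    · rw [Function.update_self, Function.update_of_ne hbp]
      have h1 : r < I b := hp ▸ hI hab
      have h2 : I b ≠ r := fun h => hbp (hI.injective (h.trans hp.symm))
      have h3 : I b ≠ s := hs b
      rcases lt_trichotomy s (I b) with h | h | h
      · exact h
      · exact absurd h.symm h3
      · exact absurd ((Hadj (I b) h2 h3).mpr h) (not_lt.mpr h1.le)
  · by_cases hbp : b = p
    · subst hbp
      rw [Function.update_self, Function.update_of_ne hap]
      have h1 : I a < r := hp ▸ hI hab
      have h2 : I a ≠ r := ne_of_lt h1
      exact (Hadj (I a) h2 (hs a)).mp h1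
    · rw [Function.update_of_ne hap, Function.update_of_ne hbp]
      exact hI hab

lemma Dm_nonneg (hk1 : 1 ≤ k) {X : Mat n} (hX : IsKNonneg k X) {r s : Fin n}
    (hrs : r ≠ s) (Hadj : ∀ x : Fin n, x ≠ r → x ≠ s → (x < r ↔ x < s))
    {m : ℕ} (hm : m ≤ k) {I J : Fin m → Fin n} (hI : StrictMono I) (hJ : StrictMono J) :
    0 ≤ Dm X r s I J := by
  by_cases hr : ∃ p, I p = r
  · obtain ⟨p, hp⟩ := hr
    have hfun : (fun j => X r (J j) + (1:ℝ) * X s (J j))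
        = (fun j => (X.submatrix I J) p j + (1:ℝ) * X s (J j)) := by
      funext j; simp [Matrix.submatrix_apply, hp]
    have hDm : Dm X r s I J = (updateRow (X.submatrix I J) p (fun j => X s (J j))).det := by
      unfold Dm
      rw [Yrow_submatrix_of_mem X r s 1 hI.injective hp, hfun,
        det_updateRow_combo (X.submatrix I J) p 1 (fun j => X s (J j))]
      ring
    rw [hDm]
    by_cases hsmem : ∃ p', I p' = s
    · obtain ⟨p', hp'⟩ := hsmem
      have hpp' : p ≠ p' := by
        intro h; exact hrs (hp ▸ hp' ▸ (h ▸ rfl))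
      have hrows : (updateRow (X.submatrix I J) p (fun j => X s (J j))) p
          = (updateRow (X.submatrix I J) p (fun j => X s (J j))) p' := by
        funext j
        rw [Matrix.updateRow_self, Matrix.updateRow_ne (Ne.symm hpp')]
        simp [Matrix.submatrix_apply, hp']
      rw [Matrix.det_zero_of_row_eq hpp' hrows]
    · push_neg at hsmem
      have heq : updateRow (X.submatrix I J) p (fun j => X s (J j))
          = X.submatrix (Function.update I p s) J := by
        ext q j
        rcases eq_or_ne q p with rfl | hq
        · simp [Matrix.updateRow_self, Matrix.submatrix_apply, Function.update_self]
        · simp [Matrix.updateRow_ne hq, Matrix.submatrix_apply, Function.update_of_ne hq]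
      rw [heq]
      exact hX m hm _ J (strictMono_update hI Hadj hp hsmem) hJ
  · push_neg at hr
    have hDm : Dm X r s I J = 0 := by
      unfold Dm; rw [Yrow_submatrix_of_notMem X r s 1 hr]; ring
    rw [hDm]

lemma strictMono_fin_one {α : Type*} [Preorder α] (f : Fin 1 → α) : StrictMono f :=
  fun a b h => absurd (Subsingleton.elim a b) (ne_of_lt h)

lemma Dm_single (X : Mat n) (r s : Fin n) (j : Fin n) :
    Dm X r s ![r] ![j] = X s j := by
  unfold Dm Yrow
  rw [Matrix.det_fin_one, Matrix.det_fin_one]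
  simp [Matrix.submatrix_apply, Matrix.updateRow_self]

lemma descend (hk1 : 1 ≤ k) {r s : Fin n} (hrs : r ≠ s)
    (Hadj : ∀ x : Fin n, x ≠ r → x ≠ s → (x < r ↔ x < s))
    {X : Mat n} (hXu : IsUnit X) (hXk : IsKNonneg k X)
    {a : ℝ} (ha : 0 < a) (hS : IsKNonneg k (Yrow X r s (-a))) :
    ∃ b : ℝ, a ≤ b ∧ IsKNonneg k (Yrow X r s (-b)) ∧
      Nnz k (Yrow X r s (-b)) < Nnz k X := by
  classical
  have key : ∀ (t : MinorIdx n k) (u : ℝ),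
      minorOf k (Yrow X r s u) t = minorOf k X t + u * Dm X r s t.2.1.1 t.2.1.2 :=
    fun t u => minor_Yrow X r s t.2.2.1.injective u
  have hD0 : ∀ t : MinorIdx n k, 0 ≤ Dm X r s t.2.1.1 t.2.1.2 :=
    fun t => Dm_nonneg hk1 hXk hrs Hadj t.1.is_le t.2.2.1 t.2.2.2
  -- a positive entry in row s
  obtain ⟨j, hj⟩ : ∃ j, X s j ≠ 0 := by
    by_contra h
    push_neg at h
    have hdet : X.det = 0 := Matrix.det_eq_zero_of_row_eq_zero s h
    have := (Matrix.isUnit_iff_isUnit_det X).mp hXu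
    rw [isUnit_iff_ne_zero] at this
    exact this hdet
  have hentry : 0 < X s j := by
    have h0 : 0 ≤ X s j := by
      have := hXk 1 hk1 ![s] ![j] (strictMono_fin_one _) (strictMono_fin_one _)
      rw [Matrix.det_fin_one] at this
      simpa using this
    exact lt_of_le_of_ne h0 (Ne.symm hj)
  set t1 : MinorIdx n k := ⟨⟨1, by omega⟩, ⟨(![r], ![j]), strictMono_fin_one _, strictMono_fin_one _⟩⟩ with ht1
  have hDt1 : Dm X r s t1.2.1.1 t1.2.1.2 = X s j := Dm_single X r s j
  set C : Finset (MinorIdx n k) :=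
    Finset.univ.filter (fun t => 0 < Dm X r s t.2.1.1 t.2.1.2) with hC
  have hCne : C.Nonempty := ⟨t1, by simp [hC, hDt1, hentry]⟩
  have hRne : (C.image (fun t => minorOf k X t / Dm X r s t.2.1.1 t.2.1.2)).Nonempty :=
    hCne.image _
  set b := (C.image (fun t => minorOf k X t / Dm X r s t.2.1.1 t.2.1.2)).min' hRne with hb
  have hge : ∀ t ∈ C, a ≤ minorOf k X t / Dm X r s t.2.1.1 t.2.1.2 := by
    intro t ht
    have hDpos : 0 < Dm X r s t.2.1.1 t.2.1.2 := (Finset.mem_filter.mp ht).2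
    rw [le_div_iff₀ hDpos]
    have h1 : 0 ≤ minorOf k (Yrow X r s (-a)) t :=
      hS t.1 t.1.is_le t.2.1.1 t.2.1.2 t.2.2.1 t.2.2.2
    rw [key t (-a)] at h1
    linarith
  have hab : a ≤ b := by
    apply Finset.le_min'
    intro y hy
    obtain ⟨t, ht, rfl⟩ := Finset.mem_image.mp hy
    exact hge t ht
  have hb0 : 0 < b := lt_of_lt_of_le ha hab
  have hmin_le : ∀ t ∈ C, b ≤ minorOf k X t / Dm X r s t.2.1.1 t.2.1.2 :=
    fun t ht => Finset.min'_le _ _ (Finset.mem_image_of_mem _ ht)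
  have hknn : IsKNonneg k (Yrow X r s (-b)) := by
    intro m hm I J hI hJ
    set t : MinorIdx n k := ⟨⟨m, by omega⟩, ⟨(I, J), hI, hJ⟩⟩ with ht
    show (0:ℝ) ≤ minorOf k (Yrow X r s (-b)) t
    rw [key t (-b)]
    rcases (hD0 t).lt_or_eq with hlt | heq
    · have hmem : t ∈ C := by simp [hC, hlt]
      have := hmin_le t hmem
      rw [le_div_iff₀ hlt] at this
      linarith
    · have h0 : 0 ≤ minorOf k X t := hXk m hm I J hI hJ
      rw [← heq]
      linarith
  refine ⟨b, hab, hknn, ?_⟩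
  have hsubset : (Finset.univ.filter fun t : MinorIdx n k => minorOf k (Yrow X r s (-b)) t ≠ 0)
      ⊆ (Finset.univ.filter fun t : MinorIdx n k => minorOf k X t ≠ 0) := by
    intro t ht
    simp only [Finset.mem_filter, Finset.mem_univ, true_and] at ht ⊢
    intro h0
    apply ht
    have hD : Dm X r s t.2.1.1 t.2.1.2 = 0 := by
      rcases (hD0 t).lt_or_eq with hlt | heq
      · have hmem : t ∈ C := by simp [hC, hlt]
        have := hge t hmem
        rw [h0] at this
        rw [le_div_iff₀ hlt] at this
        nlinarith
      · exact heq.symm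
    rw [key t (-b), h0, hD]
    ring
  obtain ⟨tstar, htC, htmin⟩ : ∃ t ∈ C, minorOf k X t / Dm X r s t.2.1.1 t.2.1.2 = b := by
    have := (C.image (fun t => minorOf k X t / Dm X r s t.2.1.1 t.2.1.2)).min'_mem hRne
    obtain ⟨t, ht, heq⟩ := Finset.mem_image.mp this
    exact ⟨t, ht, heq⟩
  have hDpos : 0 < Dm X r s tstar.2.1.1 tstar.2.1.2 := (Finset.mem_filter.mp htC).2
  have hXval : minorOf k X tstar = b * Dm X r s tstar.2.1.1 tstar.2.1.2 := by
    rw [div_eq_iff (ne_of_gt hDpos)] at htmin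
    linarith [htmin]
  have hXne : minorOf k X tstar ≠ 0 := by
    rw [hXval]
    exact ne_of_gt (mul_pos hb0 hDpos)
  have hYzero : minorOf k (Yrow X r s (-b)) tstar = 0 := by
    rw [key tstar (-b), hXval]
    ring
  apply Finset.card_lt_card
  rw [Finset.ssubset_iff_of_subset hsubset]
  exact ⟨tstar, Finset.mem_filter.mpr ⟨Finset.mem_univ _, hXne⟩,
    by simp [Finset.mem_filter, hYzero]⟩

lemma chevE_zero {i : ℕ} : chevE n i 0 = 1 := by
  ext p q
  by_cases h : (p : ℕ) = (q : ℕ)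
  · simp [chevE, h, Matrix.one_apply, Fin.ext_iff]
  · simp [chevE, h, Matrix.one_apply, Fin.ext_iff]

lemma chevE_mul {i : ℕ} (hi : i + 1 < n) (c : ℝ) (X : Mat n) :
    chevE n i c * X = Yrow X ⟨i, by omega⟩ ⟨i + 1, hi⟩ c := by
  have hi' : i < n := by omega
  ext p q
  rw [Matrix.mul_apply]
  by_cases hp : p = (⟨i, hi'⟩ : Fin n)
  · subst hp
    rw [show Yrow X ⟨i, hi'⟩ ⟨i+1, hi⟩ c ⟨i, hi'⟩ q
        = X ⟨i, hi'⟩ q + c * X ⟨i+1, hi⟩ q from by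
      simp [Yrow, Matrix.updateRow_self]]
    rw [Fintype.sum_eq_add (⟨i, hi'⟩ : Fin n) (⟨i+1, hi⟩ : Fin n)
      (by simp [Fin.ext_iff]) ?_]
    · simp [chevE]
    · intro x hx
      have h1 : (x : ℕ) ≠ i := fun h => hx.1 (Fin.ext h)
      have h2 : (x : ℕ) ≠ i + 1 := fun h => hx.2 (Fin.ext h)
      simp [chevE, Ne.symm h1, Ne.symm h2, h2]
  · have hp' : (p : ℕ) ≠ i := fun h => hp (Fin.ext h)
    rw [show Yrow X ⟨i, hi'⟩ ⟨i+1, hi⟩ c p q = X p q from by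
      simp [Yrow, Matrix.updateRow_ne hp]]
    rw [Finset.sum_eq_single p]
    · simp [chevE]
    · intro x _ hx
      have h1 : (p : ℕ) ≠ (x : ℕ) := fun h => hx.symm (Fin.ext h)
      simp [chevE, h1, hp']
    · intro h; exact absurd (Finset.mem_univ p) h

lemma chevET_mul {i : ℕ} (hi : i + 1 < n) (c : ℝ) (X : Mat n) :
    (chevE n i c)ᵀ * X = Yrow X ⟨i + 1, hi⟩ ⟨i, by omega⟩ c := by
  have hi' : i < n := by omega
  ext p q
  rw [Matrix.mul_apply]
  by_cases hp : p = (⟨i + 1, hi⟩ : Fin n)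
  · subst hp
    rw [show Yrow X ⟨i+1, hi⟩ ⟨i, hi'⟩ c ⟨i+1, hi⟩ q
        = X ⟨i+1, hi⟩ q + c * X ⟨i, hi'⟩ q from by
      simp [Yrow, Matrix.updateRow_self]]
    simp only [Matrix.transpose_apply]
    rw [Fintype.sum_eq_add (⟨i+1, hi⟩ : Fin n) (⟨i, hi'⟩ : Fin n)
      (by simp [Fin.ext_iff]) ?_]
    · simp [chevE]
    · intro x hx
      have h1 : (x : ℕ) ≠ i + 1 := fun h => hx.1 (Fin.ext h)
      have h2 : (x : ℕ) ≠ i := fun h => hx.2 (Fin.ext h)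
      simp [chevE, h1, h2]
  · have hp' : (p : ℕ) ≠ i + 1 := fun h => hp (Fin.ext h)
    rw [show Yrow X ⟨i+1, hi⟩ ⟨i, hi'⟩ c p q = X p q from by
      simp [Yrow, Matrix.updateRow_ne hp]]
    rw [Finset.sum_eq_single p]
    · simp [chevE]
    · intro x _ hx
      have h1 : (x : ℕ) ≠ (p : ℕ) := fun h => hx (Fin.ext h)
      simp [chevE, transpose_apply, h1, hp']
    · intro h; exact absurd (Finset.mem_univ p) h

lemma chevE_mul_chevE {i : ℕ} (hi : i + 1 < n) (a b : ℝ) :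
    chevE n i a * chevE n i b = chevE n i (a + b) := by
  have hi' : i < n := by omega
  rw [chevE_mul hi a (chevE n i b)]
  ext p q
  by_cases hp : p = (⟨i, hi'⟩ : Fin n)
  · subst hp
    rw [show Yrow (chevE n i b) ⟨i, hi'⟩ ⟨i+1, hi⟩ a ⟨i, hi'⟩ q
        = chevE n i b ⟨i, hi'⟩ q + a * chevE n i b ⟨i+1, hi⟩ q from by
      simp [Yrow, Matrix.updateRow_self]]
    by_cases h1 : (q : ℕ) = i
    · simp [chevE, h1]
    · by_cases h2 : (q : ℕ) = i + 1
      · simp [chevE, h1, h2]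
        ring
      · simp [chevE, h1, h2, Ne.symm h2]
  · have hp' : (p : ℕ) ≠ i := fun h => hp (Fin.ext h)
    rw [show Yrow (chevE n i b) ⟨i, hi'⟩ ⟨i+1, hi⟩ a p q = chevE n i b p q from by
      simp [Yrow, Matrix.updateRow_ne hp]]
    simp [chevE, hp']

lemma chevE_inv_mul {i : ℕ} (hi : i + 1 < n) (a : ℝ) :
    chevE n i (-a) * chevE n i a = 1 := by
  rw [chevE_mul_chevE hi]
  rw [show -a + a = 0 by ring, chevE_zero]

lemma isUnit_chevE {i : ℕ} (hi : i + 1 < n) (a : ℝ) : IsUnit (chevE n i a) :=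
  ⟨⟨chevE n i a, chevE n i (-a),
    by rw [chevE_mul_chevE hi, show a + -a = 0 by ring, chevE_zero],
    chevE_inv_mul hi a⟩, rfl⟩

lemma isUnit_transpose {X : Mat n} (h : IsUnit X) : IsUnit Xᵀ := by
  rw [Matrix.isUnit_iff_isUnit_det, Matrix.det_transpose,
    ← Matrix.isUnit_iff_isUnit_det]
  exact h

lemma knn_transpose {X : Mat n} (h : IsKNonneg k X) : IsKNonneg k Xᵀ := by
  intro m hm I J hI hJ
  rw [show Xᵀ.submatrix I J = (X.submatrix J I)ᵀ from
    (Matrix.transpose_submatrix X J I).symm, Matrix.det_transpose]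
  exact h m hm J I hJ hI

lemma minorOf_transpose (X : Mat n) (t : MinorIdx n k) :
    minorOf k Xᵀ t = ((X.submatrix t.2.1.2 t.2.1.1).det) := by
  unfold minorOf
  rw [show Xᵀ.submatrix t.2.1.1 t.2.1.2 = (X.submatrix t.2.1.2 t.2.1.1)ᵀ from
    (Matrix.transpose_submatrix X _ _).symm, Matrix.det_transpose]

def MinorIdx.swap (t : MinorIdx n k) : MinorIdx n k :=
  ⟨t.1, ⟨(t.2.1.2, t.2.1.1), t.2.2.2, t.2.2.1⟩⟩

lemma Nnz_transpose (X : Mat n) : Nnz k Xᵀ = Nnz k X := by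
  classical
  unfold Nnz
  apply Finset.card_bij' (fun t _ => MinorIdx.swap t) (fun t _ => MinorIdx.swap t)
  · intro t ht
    simp only [Finset.mem_filter, Finset.mem_univ, true_and] at ht ⊢
    rwa [show minorOf k X t.swap = minorOf k Xᵀ t from by
      rw [minorOf_transpose]; rfl]
  · intro t ht
    simp only [Finset.mem_filter, Finset.mem_univ, true_and] at ht ⊢
    rwa [show minorOf k Xᵀ t.swap = minorOf k X t from by
      rw [minorOf_transpose]; rfl]
  · intro t _; rfl
  · intro t _; rfl

lemma Hadj_e {i : ℕ} (hi : i + 1 < n) :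
    ∀ x : Fin n, x ≠ (⟨i, by omega⟩ : Fin n) → x ≠ (⟨i+1, hi⟩ : Fin n) →
      (x < (⟨i, by omega⟩ : Fin n) ↔ x < (⟨i+1, hi⟩ : Fin n)) := by
  intro x hx1 hx2
  have h1 : (x : ℕ) ≠ i := fun h => hx1 (Fin.ext h)
  have h2 : (x : ℕ) ≠ i + 1 := fun h => hx2 (Fin.ext h)
  constructor <;> intro h <;> (rw [Fin.lt_def] at h ⊢; simp at h ⊢; omega)

lemma Hadj_f {i : ℕ} (hi : i + 1 < n) :
    ∀ x : Fin n, x ≠ (⟨i+1, hi⟩ : Fin n) → x ≠ (⟨i, by omega⟩ : Fin n) →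
      (x < (⟨i+1, hi⟩ : Fin n) ↔ x < (⟨i, by omega⟩ : Fin n)) := by
  intro x hx1 hx2
  have h1 : (x : ℕ) ≠ i + 1 := fun h => hx1 (Fin.ext h)
  have h2 : (x : ℕ) ≠ i := fun h => hx2 (Fin.ext h)
  constructor <;> intro h <;> (rw [Fin.lt_def] at h ⊢; simp at h ⊢; omega)

lemma strip_left (hk1 : 1 ≤ k) {i : ℕ} (hi : i + 1 < n) {a : ℝ} (ha : 0 < a)
    {W S : Mat n} (hWu : IsUnit W) (hWk : IsKNonneg k W) (hSk : IsKNonneg k S)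
    (hWS : W = chevE n i a * S) :
    ∃ (b : ℝ) (W' : Mat n), 0 < b ∧ IsUnit W' ∧ IsKNonneg k W' ∧
      Nnz k W' < Nnz k W ∧ W = chevE n i b * W' := by
  have hi' : i < n := by omega
  have hrs : (⟨i, hi'⟩ : Fin n) ≠ ⟨i+1, hi⟩ := by simp [Fin.ext_iff]
  have hSeq : Yrow W ⟨i, hi'⟩ ⟨i+1, hi⟩ (-a) = S := by
    rw [← chevE_mul hi (-a) W, hWS, ← mul_assoc, chevE_inv_mul hi, one_mul]
  have hS' : IsKNonneg k (Yrow W ⟨i, hi'⟩ ⟨i+1, hi⟩ (-a)) := hSeq ▸ hSk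
  obtain ⟨b, hab, hbk, hlt⟩ := descend hk1 hrs (Hadj_e hi) hWu hWk ha hS'
  refine ⟨b, Yrow W ⟨i, hi'⟩ ⟨i+1, hi⟩ (-b), lt_of_lt_of_le ha hab, ?_, hbk, hlt, ?_⟩
  · rw [← chevE_mul hi (-b) W]
    exact (isUnit_chevE hi (-b)).mul hWu
  · rw [← chevE_mul hi (-b) W, ← mul_assoc, chevE_mul_chevE hi,
      show b + -b = 0 by ring, chevE_zero, one_mul]

lemma strip_leftT (hk1 : 1 ≤ k) {i : ℕ} (hi : i + 1 < n) {a : ℝ} (ha : 0 < a)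
    {W S : Mat n} (hWu : IsUnit W) (hWk : IsKNonneg k W) (hSk : IsKNonneg k S)
    (hWS : W = (chevE n i a)ᵀ * S) :
    ∃ (b : ℝ) (W' : Mat n), 0 < b ∧ IsUnit W' ∧ IsKNonneg k W' ∧
      Nnz k W' < Nnz k W ∧ W = (chevE n i b)ᵀ * W' := by
  have hi' : i < n := by omega
  have hrs : (⟨i+1, hi⟩ : Fin n) ≠ ⟨i, hi'⟩ := by simp [Fin.ext_iff]
  have hinv : (chevE n i (-a))ᵀ * (chevE n i a)ᵀ = 1 := by
    rw [← Matrix.transpose_mul, chevE_mul_chevE hi, show a + -a = 0 by ring,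
      chevE_zero, Matrix.transpose_one]
  have hSeq : Yrow W ⟨i+1, hi⟩ ⟨i, hi'⟩ (-a) = S := by
    rw [← chevET_mul hi (-a) W, hWS, ← mul_assoc, hinv, one_mul]
  have hS' : IsKNonneg k (Yrow W ⟨i+1, hi⟩ ⟨i, hi'⟩ (-a)) := hSeq ▸ hSk
  obtain ⟨b, hab, hbk, hlt⟩ := descend hk1 hrs (Hadj_f hi) hWu hWk ha hS'
  refine ⟨b, Yrow W ⟨i+1, hi⟩ ⟨i, hi'⟩ (-b), lt_of_lt_of_le ha hab, ?_, hbk, hlt, ?_⟩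
  · rw [← chevET_mul hi (-b) W]
    exact (isUnit_transpose (isUnit_chevE hi (-b))).mul hWu
  · rw [← chevET_mul hi (-b) W, ← mul_assoc, ← Matrix.transpose_mul,
      chevE_mul_chevE hi, show -b + b = 0 by ring, chevE_zero,
      Matrix.transpose_one, one_mul]

lemma chevProd_one : IsChevProd (1 : Mat n) := ⟨[], by simp, by simp⟩

lemma chevProd_cons {G P : Mat n} (hG : IsChevalley G) (hP : IsChevProd P) :
    IsChevProd (G * P) := by
  obtain ⟨L, hL, rfl⟩ := hP
  exact ⟨G :: L, by
    intro M hM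
    rcases List.mem_cons.mp hM with rfl | h
    · exact hG
    · exact hL M h, by simp⟩

lemma chevProd_append {Q G : Mat n} (hQ : IsChevProd Q) (hG : IsChevalley G) :
    IsChevProd (Q * G) := by
  obtain ⟨L, hL, rfl⟩ := hQ
  exact ⟨L ++ [G], by
    intro M hM
    rcases List.mem_append.mp hM with h | h
    · exact hL M h
    · rw [List.mem_singleton.mp h]; exact hG, by simp [List.prod_append]⟩

lemma main_aux (hk1 : 1 ≤ k) :
    ∀ N : ℕ, ∀ X : Mat n, Nnz k X ≤ N → IsUnit X → IsKNonneg k X →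
    ∃ P M Q : Mat n, IsChevProd P ∧ IsChevProd Q ∧ IsUnit M ∧ IsKNonneg k M ∧
      KIrreducible k M ∧ X = P * M * Q := by
  intro N
  induction N using Nat.strong_induction_on with
  | _ N IH =>
  intro X hN hXu hXk
  by_cases hirr : KIrreducible k X
  · exact ⟨1, X, 1, chevProd_one, chevProd_one, hXu, hXk, hirr, by simp⟩
  rw [KIrreducible] at hirr
  push_neg at hirr
  obtain ⟨R, S, hRu, hSu, hRk, hSk, hXRS, hchev⟩ := hirr
  have hchev' : IsChevalley R ∨ IsChevalley S := by
    by_cases h : IsChevalley R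
    · exact Or.inl h
    · exact Or.inr (hchev h)
  rcases hchev' with hR | hS
  · obtain ⟨i, a, hi, ha, hRe | hRf⟩ := hR
    · obtain ⟨b, X', hb, hX'u, hX'k, hlt, hfac⟩ :=
        strip_left hk1 hi ha hXu hXk hSk (by rw [hXRS, hRe])
      obtain ⟨P, M, Q, hP, hQ, hMu, hMk, hMirr, heq⟩ :=
        IH (Nnz k X') (lt_of_lt_of_le hlt hN) X' le_rfl hX'u hX'k
      refine ⟨chevE n i b * P, M, Q, chevProd_cons ⟨i, b, hi, hb, Or.inl rfl⟩ hP,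
        hQ, hMu, hMk, hMirr, ?_⟩
      rw [hfac, heq]
      noncomm_ring
    · obtain ⟨b, X', hb, hX'u, hX'k, hlt, hfac⟩ :=
        strip_leftT hk1 hi ha hXu hXk hSk (by rw [hXRS, hRf])
      obtain ⟨P, M, Q, hP, hQ, hMu, hMk, hMirr, heq⟩ :=
        IH (Nnz k X') (lt_of_lt_of_le hlt hN) X' le_rfl hX'u hX'k
      refine ⟨(chevE n i b)ᵀ * P, M, Q, chevProd_cons ⟨i, b, hi, hb, Or.inr rfl⟩ hP,
        hQ, hMu, hMk, hMirr, ?_⟩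
      rw [hfac, heq]
      noncomm_ring
  · obtain ⟨i, a, hi, ha, hSe | hSf⟩ := hS
    · -- X = R * chevE  ⇒  Xᵀ = (chevE a)ᵀ * Rᵀ
      have hWS : Xᵀ = (chevE n i a)ᵀ * Rᵀ := by
        rw [hXRS, hSe, Matrix.transpose_mul]
      obtain ⟨b, W', hb, hW'u, hW'k, hlt, hfac⟩ :=
        strip_leftT hk1 hi ha (isUnit_transpose hXu) (knn_transpose hXk) (knn_transpose hRk) hWS
      have hltX : Nnz k W'ᵀ < N := by
        rw [Nnz_transpose]
        rw [Nnz_transpose] at hlt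
        exact lt_of_lt_of_le hlt hN
      obtain ⟨P, M, Q, hP, hQ, hMu, hMk, hMirr, heq⟩ :=
        IH (Nnz k W'ᵀ) hltX W'ᵀ le_rfl (isUnit_transpose hW'u) (knn_transpose hW'k)
      refine ⟨P, M, Q * chevE n i b, hP,
        chevProd_append hQ ⟨i, b, hi, hb, Or.inl rfl⟩, hMu, hMk, hMirr, ?_⟩
      have hX' : X = W'ᵀ * chevE n i b := by
        have h := congrArg Matrix.transpose hfac
        simpa [Matrix.transpose_mul, Matrix.transpose_transpose] using h
      rw [hX', heq]
      noncomm_ring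
    · have hWS : Xᵀ = chevE n i a * Rᵀ := by
        rw [hXRS, hSf, Matrix.transpose_mul, Matrix.transpose_transpose]
      obtain ⟨b, W', hb, hW'u, hW'k, hlt, hfac⟩ :=
        strip_left hk1 hi ha (isUnit_transpose hXu) (knn_transpose hXk) (knn_transpose hRk) hWS
      have hltX : Nnz k W'ᵀ < N := by
        rw [Nnz_transpose]
        rw [Nnz_transpose] at hlt
        exact lt_of_lt_of_le hlt hN
      obtain ⟨P, M, Q, hP, hQ, hMu, hMk, hMirr, heq⟩ :=
        IH (Nnz k W'ᵀ) hltX W'ᵀ le_rfl (isUnit_transpose hW'u) (knn_transpose hW'k)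
      refine ⟨P, M, Q * (chevE n i b)ᵀ, hP,
        chevProd_append hQ ⟨i, b, hi, hb, Or.inr rfl⟩, hMu, hMk, hMirr, ?_⟩
      have hX' : X = W'ᵀ * (chevE n i b)ᵀ := by
        have h := congrArg Matrix.transpose hfac
        simpa [Matrix.transpose_mul, Matrix.transpose_transpose] using h
      rw [hX', heq]
      noncomm_ring

end ChevAux

/-- Every invertible `k`-nonnegative matrix factors as (Chevalley generators) ·
(`k`-irreducible matrix) · (Chevalley generators). -/
theorem factorization_into_irreducible {n k : ℕ} (hk1 : 1 ≤ k) (hkn : k ≤ n)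
    (X : Matrix (Fin n) (Fin n) ℝ) (hX : IsUnit X) (hXk : IsKNonneg k X) :
    ∃ P M Q : Matrix (Fin n) (Fin n) ℝ, IsChevProd P ∧ IsChevProd Q ∧
      IsUnit M ∧ IsKNonneg k M ∧ KIrreducible k M ∧ X = P * M * Q := by
  exact ChevAux.main_aux hk1 (ChevAux.Nnz k X) X le_rfl hX hXk
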